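/- Let Γ be a finite connected graph, not complete bipartite, and G ≤ Aut(Γ) locally quasiprimitive and edge-transitive with G_v transitive on Γ(v) for all v. Let Z = Z(G). Then |G| ≤ |G:Z| · (2|G:Z|)^{|G:Z|}. Consequently |G : Z(G)| ≥ F(|G|) for the strictly increasing function F inverse to x ↦ x(2x)^x. -/

import Mathlib

set_option maxHeartbeats 1000000

open MulAction Subgroup SimpleGraph

private lemma reach_ind2 {V : Type*} (Γ : SimpleGraph V) (P : V → Prop)
    (hP : ∀ x y, Γ.Adj x y → P x → P y) {x y : V} (h : Γ.Reachable x y) (hx : P x) : P y := by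
  obtain ⟨w⟩ := h
  induction w with
  | nil => exact hx
  | cons h' p ih => exact ih (hP _ _ h' hx)

private lemma card_le_pow_of_gen {A : Type*} [CommGroup A] [Finite A] {ι : Type*} [Fintype ι]
    [DecidableEq ι] (f : ι → A) (hgen : ∀ a : A, a ∈ Subgroup.closure (Set.range f))
    (e : ℕ) (he : 1 < e) (hord : ∀ i, f i ^ e = 1) :
    Nat.card A ≤ e ^ (Fintype.card ι) := by
  haveI : NeZero e := ⟨by omega⟩
  haveI : Fact (1 < e) := ⟨he⟩
  have hpow : ∀ (i : ι) (m n : ℕ), m % e = n % e → f i ^ m = f i ^ n := by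
    intro i m n hmn
    have hdvd : orderOf (f i) ∣ e := orderOf_dvd_of_pow_eq_one (hord i)
    exact pow_eq_pow_iff_modEq.mpr ((Nat.ModEq.of_dvd hdvd) hmn)
  let φ : (ι → Multiplicative (ZMod e)) →* A :=
    MonoidHom.mk' (fun x => ∏ i, f i ^ ((x i).toAdd.val)) (by
      intro a b
      rw [← Finset.prod_mul_distrib]
      refine Finset.prod_congr rfl fun i _ => ?_
      have h1 : ((a * b) i).toAdd = (a i).toAdd + (b i).toAdd := rfl
      rw [h1, ← pow_add]
      refine hpow i _ _ ?_
      rw [ZMod.val_add, Nat.mod_mod_of_dvd _ dvd_rfl])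
  have hsurj : Function.Surjective φ := by
    intro a
    have : a ∈ φ.range := by
      have hsub : Set.range f ⊆ (φ.range : Set A) := by
        rintro _ ⟨i, rfl⟩
        refine ⟨(Pi.mulSingle i (Multiplicative.ofAdd (1 : ZMod e)) :
          ι → Multiplicative (ZMod e)), ?_⟩
        show (∏ j, f j ^ (((Pi.mulSingle i (Multiplicative.ofAdd (1 : ZMod e)) :
          ι → Multiplicative (ZMod e)) j).toAdd.val)) = f i
        rw [Fintype.prod_eq_single i]
        · rw [Pi.mulSingle_eq_same]
          simp [ZMod.val_one]
        · intro j hj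
          rw [Pi.mulSingle_eq_of_ne hj]
          simp [ZMod.val_zero]
      exact (Subgroup.closure_le _).mpr hsub (hgen a)
    exact this
  calc Nat.card A ≤ Nat.card (ι → Multiplicative (ZMod e)) :=
        Nat.card_le_card_of_surjective φ hsurj
    _ = e ^ (Fintype.card ι) := by
        simp [Nat.card_eq_fintype_card, Fintype.card_fun]


section Helpers

variable {V G : Type*} [Fintype V] [Group G] [Finite G] [MulAction G V] [FaithfulSMul G V]
variable (Γ : SimpleGraph V)

private lemma reach_ind' (P : V → Prop)
    (hP : ∀ x y, Γ.Adj x y → P x → P y) {x y : V} (h : Γ.Reachable x y) (hx : P x) : P y := by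
  obtain ⟨w⟩ := h
  induction w with
  | nil => exact hx
  | cons h' p ih => exact ih (hP _ _ h' hx)

/-- The key "complete bipartite" contradiction. -/
private lemma helper_notCB
    (hconn : Γ.Connected)
    (hAut : ∀ (g : G) (u w : V), Γ.Adj (g • u) (g • w) ↔ Γ.Adj u w)
    (hncb : ¬ ∃ s : Set V, ∀ u w : V,
      Γ.Adj u w ↔ ((u ∈ s ∧ w ∉ s) ∨ (u ∉ s ∧ w ∈ s)))
    (hqp : ∀ (v : V) (N : Subgroup (MulAction.stabilizer G v)), N.Normal →
      (∃ n ∈ N, ∃ u ∈ Γ.neighborSet v, ((n : MulAction.stabilizer G v) : G) • u ≠ u) →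
      ∀ u ∈ Γ.neighborSet v, ∀ w ∈ Γ.neighborSet v,
        ∃ n ∈ N, ((n : MulAction.stabilizer G v) : G) • u = w)
    (het : ∀ (u v u' v' : V), Γ.Adj u v → Γ.Adj u' v' →
      ∃ g : G, (g • u = u' ∧ g • v = v') ∨ (g • u = v' ∧ g • v = u'))
    (u w : V) (huw : Γ.Adj u w) (z : G) (hz : z ∈ Subgroup.center G)
    (hfix : ∀ p ∈ MulAction.orbit G u, z • p = p)
    (y₀ : V) (hy₀w : y₀ ∈ MulAction.orbit G w) (hy₀nu : y₀ ∉ MulAction.orbit G u)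
    (hmv : z • y₀ ≠ y₀) : False := by
  classical
  -- orbits of u and w are disjoint
  have hdisj : ∀ x : V, x ∈ MulAction.orbit G u → x ∈ MulAction.orbit G w → False := by
    intro x hxu hxw
    apply hy₀nu
    have h1 : MulAction.orbit G x = MulAction.orbit G u := MulAction.orbit_eq_iff.mpr hxu
    have h2 : MulAction.orbit G x = MulAction.orbit G w := MulAction.orbit_eq_iff.mpr hxw
    rw [← h2, h1] at hy₀w
    exact hy₀w
  -- every edge crosses the two orbits
  have hcross : ∀ x y : V, Γ.Adj x y →
      (x ∈ MulAction.orbit G u ∧ y ∈ MulAction.orbit G w) ∨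
      (x ∈ MulAction.orbit G w ∧ y ∈ MulAction.orbit G u) := by
    intro x y hxy
    obtain ⟨g, hg⟩ := het u w x y huw hxy
    rcases hg with ⟨h1, h2⟩ | ⟨h1, h2⟩
    · exact Or.inl ⟨⟨g, h1⟩, ⟨g, h2⟩⟩
    · exact Or.inr ⟨⟨g, h2⟩, ⟨g, h1⟩⟩
  -- a neighbour of y₀ in the orbit of u
  obtain ⟨g, hg⟩ := id hy₀w
  set v' : V := g • u with hv'
  have hv'u : v' ∈ MulAction.orbit G u := ⟨g, rfl⟩
  have hadj' : Γ.Adj v' y₀ := by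
    rw [hv', ← hg]
    exact (hAut g u w).mpr huw
  -- central elements fixing v' fix the whole orbit of u pointwise
  have hcfix : ∀ ζ : G, ζ ∈ Subgroup.center G → ζ • v' = v' →
      ∀ p ∈ MulAction.orbit G u, ζ • p = p := by
    intro ζ hζ hζv' p hp
    obtain ⟨h, hh⟩ := hp
    have hζu : ζ • u = u := by
      have hcomm : ζ * g = g * ζ := ((Subgroup.mem_center_iff.mp hζ) g).symm
      have h2 : (ζ * g) • u = g • u := by rw [mul_smul]; exact hζv'
      rw [hcomm, mul_smul] at h2
      exact smul_left_cancel g h2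
    have hcomm : ζ * h = h * ζ := ((Subgroup.mem_center_iff.mp hζ) h).symm
    rw [← hh, ← mul_smul, hcomm, mul_smul, hζu]
  -- z fixes v' and moves its neighbour y₀
  have hzv' : z • v' = v' := hfix v' hv'u
  have hzstab : z ∈ MulAction.stabilizer G v' := hzv'
  -- apply local quasiprimitivity at v'
  set N : Subgroup (MulAction.stabilizer G v') :=
    (Subgroup.center G).comap (MulAction.stabilizer G v').subtype with hN
  have hNnormal : N.Normal := Subgroup.Normal.comap inferInstance _
  have htrans : ∀ p ∈ Γ.neighborSet v', ∀ q ∈ Γ.neighborSet v',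
      ∃ n ∈ N, ((n : MulAction.stabilizer G v') : G) • p = q := by
    refine hqp v' N hNnormal ?_
    refine ⟨⟨z, hzstab⟩, ?_, y₀, ?_, ?_⟩
    · exact hz
    · exact (SimpleGraph.mem_neighborSet Γ v' y₀).mpr hadj'
    · exact hmv
  -- transitivity of the central fixators on the neighbourhood of every vertex in orbit u
  have htrans' : ∀ v'' ∈ MulAction.orbit G u, ∀ p q : V, Γ.Adj v'' p → Γ.Adj v'' q →
      ∃ ζ : G, ζ ∈ Subgroup.center G ∧ (∀ r ∈ MulAction.orbit G u, ζ • r = r) ∧ ζ • p = q := by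
    intro v'' hv'' p q hp hq
    -- write v'' = h • v'
    have : MulAction.orbit G v'' = MulAction.orbit G v' := by
      rw [MulAction.orbit_eq_iff.mpr hv'', MulAction.orbit_eq_iff.mpr hv'u]
    have hv''mem : v'' ∈ MulAction.orbit G v' := by
      rw [← this]; exact MulAction.mem_orbit_self v''
    obtain ⟨h, hh⟩ := hv''mem
    have hp' : Γ.Adj v' (h⁻¹ • p) := by
      have := (hAut h⁻¹ v'' p).mpr hp
      rwa [← hh, inv_smul_smul] at this
    have hq' : Γ.Adj v' (h⁻¹ • q) := by
      have := (hAut h⁻¹ v'' q).mpr hq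
      rwa [← hh, inv_smul_smul] at this
    obtain ⟨n, hnN, hnpq⟩ := htrans (h⁻¹ • p) ((SimpleGraph.mem_neighborSet Γ _ _).mpr hp')
      (h⁻¹ • q) ((SimpleGraph.mem_neighborSet Γ _ _).mpr hq')
    set ζ : G := ((n : MulAction.stabilizer G v') : G) with hζdef
    have hζc : ζ ∈ Subgroup.center G := by
      have := hnN
      rw [hN, Subgroup.mem_comap] at this
      exact this
    have hζv' : ζ • v' = v' := (n : MulAction.stabilizer G v').2
    refine ⟨ζ, hζc, hcfix ζ hζc hζv', ?_⟩
    have hcomm : ζ * h⁻¹ = h⁻¹ * ζ := ((Subgroup.mem_center_iff.mp hζc) h⁻¹).symm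
    have : ζ • (h⁻¹ • p) = h⁻¹ • q := hnpq
    rw [← mul_smul, hcomm, mul_smul] at this
    have := congrArg (fun x => h • x) this
    simpa [smul_smul, ← mul_smul] using this
  -- the set S : orbit of y₀ under central fixators of orbit u
  set S : Set V := {p | ∃ ζ : G, ζ ∈ Subgroup.center G ∧
      (∀ r ∈ MulAction.orbit G u, ζ • r = r) ∧ p = ζ • y₀} with hS
  have hy₀S : y₀ ∈ S := ⟨1, Subgroup.one_mem _, fun r _ => one_smul G r, (one_smul G y₀).symm⟩
  have hSw : S ⊆ MulAction.orbit G w := by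
    rintro p ⟨ζ, _, _, rfl⟩
    obtain ⟨g', hg'⟩ := id hy₀w
    refine ⟨ζ * g', ?_⟩
    show (ζ * g') • w = ζ • y₀
    rw [mul_smul, show g' • w = y₀ from hg']
  -- key: a vertex of orbit u with a neighbour in S has neighbourhood exactly S
  have hkey : ∀ x ∈ MulAction.orbit G u, (∃ p ∈ S, Γ.Adj x p) →
      (∀ q : V, Γ.Adj x q ↔ q ∈ S) := by
    rintro x hxu ⟨p, ⟨ζ₁, hζ₁c, hζ₁f, hpy⟩, hxp⟩ q
    constructor
    · intro hxq
      obtain ⟨ζ₂, hζ₂c, hζ₂f, hζ₂pq⟩ := htrans' x hxu p q hxp hxq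
      refine ⟨ζ₂ * ζ₁, Subgroup.mul_mem _ hζ₂c hζ₁c, ?_, ?_⟩
      · intro r hr; rw [mul_smul, hζ₁f r hr, hζ₂f r hr]
      · rw [mul_smul, ← hpy, hζ₂pq]
    · rintro ⟨ζ, hζc, hζf, rfl⟩
      -- q = ζ • y₀, p = ζ₁ • y₀; σ := ζ * ζ₁⁻¹ maps p to q and fixes x
      have hσf : ∀ r ∈ MulAction.orbit G u, (ζ * ζ₁⁻¹) • r = r := by
        intro r hr
        have h1 : ζ₁⁻¹ • r = r := by
          have := hζ₁f r hr
          calc ζ₁⁻¹ • r = ζ₁⁻¹ • (ζ₁ • r) := by rw [this]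
          _ = r := inv_smul_smul ζ₁ r
        rw [mul_smul, h1, hζf r hr]
      have hσpq : (ζ * ζ₁⁻¹) • p = ζ • y₀ := by
        rw [hpy, mul_smul, inv_smul_smul]
      have := (hAut (ζ * ζ₁⁻¹) x p).mpr hxp
      rwa [hσf x hxu, hσpq] at this
  -- the set W = S ∪ (vertices with a neighbour in S) is closed under adjacency
  set W : Set V := {x | x ∈ S ∨ ∃ p ∈ S, Γ.Adj x p} with hW
  have hWclosed : ∀ x y : V, Γ.Adj x y → x ∈ W → y ∈ W := by
    intro x y hxy hx
    rcases hx with hxS | ⟨p, hpS, hxp⟩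
    · exact Or.inr ⟨x, hxS, hxy.symm⟩
    · -- x has a neighbour in S so x ∈ orbit u
      have hxu : x ∈ MulAction.orbit G u := by
        rcases hcross x p hxp with ⟨h1, _⟩ | ⟨h1, h2⟩
        · exact h1
        · exact (hdisj p h2 (hSw hpS)).elim
      exact Or.inl ((hkey x hxu ⟨p, hpS, hxp⟩ y).mp hxy)
  have hWall : ∀ x : V, x ∈ W := by
    intro x
    exact reach_ind' Γ (· ∈ W) hWclosed (hconn.preconnected y₀ x) (Or.inl hy₀S)
  -- now Γ is complete bipartite with parts S, Sᶜ : contradiction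
  apply hncb
  refine ⟨S, ?_⟩
  intro p q
  have hSnotu : ∀ x ∈ S, x ∉ MulAction.orbit G u := fun x hx hc => hdisj x hc (hSw hx)
  have hBpart : ∀ x : V, x ∉ S → x ∈ MulAction.orbit G u ∧ ∀ q', Γ.Adj x q' ↔ q' ∈ S := by
    intro x hxS
    rcases hWall x with h | ⟨p', hp'S, hxp'⟩
    · exact absurd h hxS
    · have hxu : x ∈ MulAction.orbit G u := by
        rcases hcross x p' hxp' with ⟨h1, _⟩ | ⟨h1, h2⟩
        · exact h1
        · exact (hdisj p' h2 (hSw hp'S)).elim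
      exact ⟨hxu, hkey x hxu ⟨p', hp'S, hxp'⟩⟩
  constructor
  · intro hpq
    by_cases hpS : p ∈ S
    · refine Or.inl ⟨hpS, ?_⟩
      intro hqS
      -- edge within S ⊆ orbit w : impossible by hcross
      rcases hcross p q hpq with ⟨h1, _⟩ | ⟨_, h2⟩
      · exact hdisj p h1 (hSw hpS)
      · exact hdisj q h2 (hSw hqS)
    · refine Or.inr ⟨hpS, ?_⟩
      exact ((hBpart p hpS).2 q).mp hpq
  · rintro (⟨hpS, hqS⟩ | ⟨hpS, hqS⟩)
    · exact (((hBpart q hqS).2 p).mpr hpS).symm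
    · exact ((hBpart p hpS).2 q).mpr hqS


/-- The centre acts semiregularly. -/
private lemma semiregular_center
    (hconn : Γ.Connected)
    (hAut : ∀ (g : G) (u w : V), Γ.Adj (g • u) (g • w) ↔ Γ.Adj u w)
    (hncb : ¬ ∃ s : Set V, ∀ u w : V,
      Γ.Adj u w ↔ ((u ∈ s ∧ w ∉ s) ∨ (u ∉ s ∧ w ∈ s)))
    (hqp : ∀ (v : V) (N : Subgroup (MulAction.stabilizer G v)), N.Normal →
      (∃ n ∈ N, ∃ u ∈ Γ.neighborSet v, ((n : MulAction.stabilizer G v) : G) • u ≠ u) →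
      ∀ u ∈ Γ.neighborSet v, ∀ w ∈ Γ.neighborSet v,
        ∃ n ∈ N, ((n : MulAction.stabilizer G v) : G) • u = w)
    (het : ∀ (u v u' v' : V), Γ.Adj u v → Γ.Adj u' v' →
      ∃ g : G, (g • u = u' ∧ g • v = v') ∨ (g • u = v' ∧ g • v = u'))
    (u₀ w₀ : V) (hadj₀ : Γ.Adj u₀ w₀) :
    ∀ z : G, z ∈ Subgroup.center G → ∀ x : V, z • x = x → z = 1 := by
  classical
  intro z hz x₀ hzx₀
  by_contra hz1
  -- z moves some vertex
  have hmove : ∃ y₀ : V, z • y₀ ≠ y₀ := by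
    by_contra hc
    push_neg at hc
    exact hz1 (eq_of_smul_eq_smul (fun y : V => by rw [hc y, one_smul]))
  obtain ⟨y₀, hy₀⟩ := hmove
  -- z fixes the orbit of x₀ pointwise
  have hfix : ∀ p ∈ MulAction.orbit G x₀, z • p = p := by
    rintro p ⟨h, rfl⟩
    show z • h • x₀ = h • x₀
    have hcomm : z * h = h * z := ((Subgroup.mem_center_iff.mp hz) h).symm
    rw [← mul_smul, hcomm, mul_smul, hzx₀]
  -- every vertex is in the orbit of u₀ or of w₀
  have hcover : ∀ x : V, x ∈ MulAction.orbit G u₀ ∨ x ∈ MulAction.orbit G w₀ := by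
    intro x
    -- x has a neighbour
    have hnbr : ∃ y : V, Γ.Adj x y := by
      obtain ⟨wk⟩ := hconn.preconnected x u₀
      cases wk with
      | nil => exact ⟨w₀, hadj₀⟩
      | cons h' p => exact ⟨_, h'⟩
    obtain ⟨y, hy⟩ := hnbr
    obtain ⟨g, hg⟩ := het u₀ w₀ x y hadj₀ hy
    rcases hg with ⟨h1, _⟩ | ⟨_, h2⟩
    · exact Or.inl ⟨g, h1⟩
    · exact Or.inr ⟨g, h2⟩
  -- y₀ is not in the orbit of x₀
  have hy₀no : y₀ ∉ MulAction.orbit G x₀ := fun hc => hy₀ (hfix y₀ hc)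
  -- the orbit of x₀ is the orbit of u₀ or of w₀
  rcases hcover x₀ with hx₀u | hx₀w
  · -- orbit x₀ = orbit u₀
    have horb : MulAction.orbit G x₀ = MulAction.orbit G u₀ := MulAction.orbit_eq_iff.mpr hx₀u
    rw [horb] at hfix hy₀no
    have hy₀w : y₀ ∈ MulAction.orbit G w₀ := (hcover y₀).resolve_left hy₀no
    exact helper_notCB Γ hconn hAut hncb hqp het u₀ w₀ hadj₀ z hz hfix y₀ hy₀w hy₀no hy₀
  · have horb : MulAction.orbit G x₀ = MulAction.orbit G w₀ := MulAction.orbit_eq_iff.mpr hx₀w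
    rw [horb] at hfix hy₀no
    have hy₀u : y₀ ∈ MulAction.orbit G u₀ := (hcover y₀).resolve_right hy₀no
    exact helper_notCB Γ hconn hAut hncb hqp het w₀ u₀ hadj₀.symm z hz hfix y₀ hy₀u hy₀no hy₀

end Helpers


/-- Let `Γ` be a finite connected graph, not complete bipartite, and `G ≤ Aut(Γ)` locally
quasiprimitive, edge-transitive and locally arc-transitive. With `Z = Z(G)` and
`t = |G : Z|` we have `|G| ≤ t · (2t)^t`; equivalently `|G : Z(G)| ≥ F(|G|)` for the
strictly increasing inverse `F` of `x ↦ x(2x)^x`. -/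
theorem card_le_of_locally_quasiprimitive
    (V G : Type*) [Fintype V] [Group G] [Finite G] [MulAction G V] [FaithfulSMul G V]
    (Γ : SimpleGraph V) (hconn : Γ.Connected)
    (hAut : ∀ (g : G) (u w : V), Γ.Adj (g • u) (g • w) ↔ Γ.Adj u w)
    (hncb : ¬ ∃ s : Set V, ∀ u w : V,
      Γ.Adj u w ↔ ((u ∈ s ∧ w ∉ s) ∨ (u ∉ s ∧ w ∈ s)))
    (hqp : ∀ (v : V) (N : Subgroup (MulAction.stabilizer G v)), N.Normal →
      (∃ n ∈ N, ∃ u ∈ Γ.neighborSet v, ((n : MulAction.stabilizer G v) : G) • u ≠ u) →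
      ∀ u ∈ Γ.neighborSet v, ∀ w ∈ Γ.neighborSet v,
        ∃ n ∈ N, ((n : MulAction.stabilizer G v) : G) • u = w)
    (hlat : ∀ (v : V), ∀ u ∈ Γ.neighborSet v, ∀ w ∈ Γ.neighborSet v,
      ∃ g ∈ MulAction.stabilizer G v, g • u = w)
    (het : ∀ (u v u' v' : V), Γ.Adj u v → Γ.Adj u' v' →
      ∃ g : G, (g • u = u' ∧ g • v = v') ∨ (g • u = v' ∧ g • v = u')) :
    Nat.card G ≤ (Subgroup.center G).index *
      (2 * (Subgroup.center G).index) ^ (Subgroup.center G).index := by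
  classical
  -- the graph has an edge (otherwise it is "complete bipartite" with parts ∅, V)
  have hedge : ∃ u w : V, Γ.Adj u w := by
    by_contra hc
    push_neg at hc
    exact hncb ⟨∅, fun u w => by simp [hc u w]⟩
  obtain ⟨u₀, w₀, hadj₀⟩ := hedge
  -- the centre acts semiregularly
  have hfree : ∀ z : G, z ∈ Subgroup.center G → ∀ x : V, z • x = x → z = 1 :=
    semiregular_center Γ hconn hAut hncb hqp het u₀ w₀ hadj₀
  classical
  set t := (Subgroup.center G).index with ht
  haveI : (Subgroup.center G).FiniteIndex := ⟨Subgroup.index_ne_zero_of_finite⟩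
  have ht1 : 1 ≤ t := Nat.one_le_iff_ne_zero.mpr Subgroup.index_ne_zero_of_finite
  -- the transfer homomorphism to the centre
  set τ := MonoidHom.transferCenterPow G with hτdef
  have hτ : ∀ g : G, ((τ g : G)) = g ^ t := fun g => MonoidHom.transferCenterPow_apply g
  have hsmulpow : ∀ (g : G) (x : V) (n : ℕ), g • x = x → g ^ n • x = x := by
    intro g x n h
    induction n with
    | zero => simp
    | succ n ih => rw [pow_succ, mul_smul, h, ih]
  have hstabkill : ∀ (x : V) (h : G), h • x = x → τ h = 1 := by
    intro x h hx
    have h3 : ((τ h : G)) • x = x := by rw [hτ]; exact hsmulpow h x t hx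
    exact Subtype.ext (hfree _ (τ h).2 x h3)
  set M := τ.ker with hMdef
  have hMmem : ∀ (x : V) (h : G), h • x = x → h ∈ M := fun x h hx =>
    MonoidHom.mem_ker.mpr (hstabkill x h hx)
  have hMfromfix : ∀ (x : V) (h : G), (∃ m ∈ M, m • x = h • x) → h ∈ M := by
    rintro x h ⟨m, hm, hmx⟩
    have h1 : (m⁻¹ * h) • x = x := by rw [mul_smul, ← hmx, inv_smul_smul]
    have h2 := hMmem x _ h1
    have h3 : h = m * (m⁻¹ * h) := by group
    rw [h3]; exact mul_mem hm h2
  -- neighbours of a common vertex are in the same M-orbit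
  have hNbrM : ∀ (x y y' : V), Γ.Adj x y → Γ.Adj x y' → ∃ m ∈ M, m • y = y' := by
    intro x y y' h1 h2
    obtain ⟨g, hg, hgyy⟩ := hlat x y ((SimpleGraph.mem_neighborSet Γ x y).mpr h1) y'
      ((SimpleGraph.mem_neighborSet Γ x y').mpr h2)
    exact ⟨g, hMmem x g hg, hgyy⟩
  -- the M-orbits of u₀ and w₀ cover V
  have hcoverM : ∀ x : V, (∃ m ∈ M, m • u₀ = x) ∨ (∃ m ∈ M, m • w₀ = x) := by
    intro x
    refine reach_ind2 Γ (fun y => (∃ m ∈ M, m • u₀ = y) ∨ (∃ m ∈ M, m • w₀ = y)) ?_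
      (hconn.preconnected u₀ x) (Or.inl ⟨1, one_mem M, one_smul G u₀⟩)
    intro a b hab hPa
    rcases hPa with ⟨m, hm, hmu⟩ | ⟨m, hm, hmw⟩
    · have h1 : Γ.Adj u₀ (m⁻¹ • b) := by
        have := (hAut m⁻¹ a b).mpr hab
        rwa [← hmu, inv_smul_smul] at this
      obtain ⟨m', hm', hmw'⟩ := hNbrM u₀ w₀ (m⁻¹ • b) hadj₀ h1
      exact Or.inr ⟨m * m', mul_mem hm hm', by rw [mul_smul, hmw', smul_inv_smul]⟩
    · have h1 : Γ.Adj w₀ (m⁻¹ • b) := by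
        have := (hAut m⁻¹ a b).mpr hab
        rwa [← hmw, inv_smul_smul] at this
      obtain ⟨m', hm', hmu'⟩ := hNbrM w₀ u₀ (m⁻¹ • b) hadj₀.symm h1
      exact Or.inl ⟨m * m', mul_mem hm hm', by rw [mul_smul, hmu', smul_inv_smul]⟩
  -- every square is in M
  have hsq : ∀ g : G, g * g ∈ M := by
    intro g
    rcases hcoverM (g • u₀) with hcase | ⟨m, hm, hmw⟩
    · have := hMfromfix u₀ g hcase
      exact mul_mem this this
    · rcases hcoverM (g • w₀) with ⟨m'', hm'', hmu''⟩ | hcase2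
      · apply hMfromfix u₀ (g * g)
        refine ⟨(g * m * g⁻¹) * m'', mul_mem ?_ hm'', ?_⟩
        · have : τ (g * m * g⁻¹) = 1 := by
            rw [map_mul, map_mul, MonoidHom.mem_ker.mp hm]
            simp
          exact MonoidHom.mem_ker.mpr this
        · rw [mul_smul, hmu'']
          have : (g * m * g⁻¹) • (g • w₀) = (g * m) • w₀ := by
            rw [← mul_smul]
            congr 1
            group
          rw [this, mul_smul, hmw, ← mul_smul]
      · have := hMfromfix w₀ g hcase2
        exact mul_mem this this
  -- exponent bound : g ^ (2t) = 1 for all g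
  have hexp : ∀ g : G, g ^ (2 * t) = 1 := by
    intro g
    have h1 : τ (g * g) = 1 := MonoidHom.mem_ker.mp (hsq g)
    have h2 : (g * g) ^ t = 1 := by
      have := hτ (g * g)
      rw [h1] at this
      exact this.symm
    calc g ^ (2 * t) = (g * g) ^ t := by rw [← pow_two, ← pow_mul]
    _ = 1 := h2

  -- Part 2 : the centre is generated by at most t elements
  set A := Subgroup.center G with hA
  have hfree_eq : ∀ (a b : ↥A) (x : V), (a : G) • x = (b : G) • x → a = b := by
    intro a b x hx
    have h1 : ((b : G)⁻¹ * (a : G)) • x = x := by rw [mul_smul, hx, inv_smul_smul]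
    have h2 : ((b⁻¹ * a : ↥A) : G) • x = x := by push_cast; exact h1
    have h3 : ((b⁻¹ * a : ↥A) : G) = 1 := hfree _ (b⁻¹ * a).2 x h2
    have h4 : (b⁻¹ * a : ↥A) = 1 := Subtype.ext h3
    exact (inv_mul_eq_one.mp h4).symm
  -- vertex transversal
  let rV : V → V → Prop := fun x y => ∃ a : ↥A, (a : G) • y = x
  have rV_equiv : Equivalence rV := by
    constructor
    · intro x; exact ⟨1, by simp⟩
    · rintro x y ⟨a, ha⟩
      exact ⟨a⁻¹, by rw [← ha]; push_cast; rw [inv_smul_smul]⟩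
    · rintro x y z ⟨a, ha⟩ ⟨c, hc⟩
      exact ⟨a * c, by push_cast; rw [mul_smul, hc, ha]⟩
  let sV : Setoid V := ⟨rV, rV_equiv⟩
  let rep : V → V := fun x => (Quotient.mk sV x).out
  have hmk_rep : ∀ x, Quotient.mk sV (rep x) = Quotient.mk sV x := fun x => Quotient.out_eq _
  have hrel : ∀ x, rV (rep x) x := fun x => Quotient.exact (hmk_rep x)
  have hex : ∀ x, ∃ a : ↥A, (a : G) • rep x = x := by
    intro x
    obtain ⟨a, ha⟩ := hrel x
    exact ⟨a⁻¹, by rw [← ha]; push_cast; rw [inv_smul_smul]⟩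
  let al : V → ↥A := fun x => Classical.choose (hex x)
  have hα : ∀ x, ((al x : G)) • rep x = x := fun x => Classical.choose_spec (hex x)
  have hrep_smul : ∀ (a : ↥A) (x : V), rep ((a : G) • x) = rep x := by
    intro a x
    have h1 : Quotient.mk sV ((a : G) • x) = Quotient.mk sV x := Quotient.sound ⟨a, rfl⟩
    simpa [rep] using congrArg Quotient.out h1
  have hrep_rep : ∀ x, rep (rep x) = rep x := by
    intro x
    simpa [rep] using congrArg Quotient.out (hmk_rep x)
  have hα_mul : ∀ (a : ↥A) (x : V), al ((a : G) • x) = a * al x := by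
    intro a x
    apply hfree_eq _ _ (rep x)
    have h1 : ((al ((a : G) • x) : G)) • rep ((a : G) • x) = (a : G) • x := hα _
    rw [hrep_smul] at h1
    rw [h1]
    push_cast
    rw [mul_smul, hα]
  have hα_rep : ∀ x, al (rep x) = 1 := by
    intro x
    apply hfree_eq _ _ (rep x)
    have h1 := hα (rep x)
    rw [hrep_rep] at h1
    rw [h1]
    simp
  let β : V → V → ↥A := fun x y => (al x)⁻¹ * al y
  have hβ_smul : ∀ (a : ↥A) (x y : V), β ((a : G) • x) ((a : G) • y) = β x y := by
    intro a x y
    show (al ((a : G) • x))⁻¹ * al ((a : G) • y) = (al x)⁻¹ * al y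
    rw [hα_mul, hα_mul, mul_inv_rev]
    group
  have hβ_symm : ∀ x y, β y x = (β x y)⁻¹ := by
    intro x y
    show (al y)⁻¹ * al x = ((al x)⁻¹ * al y)⁻¹
    rw [mul_inv_rev, inv_inv]
  -- quotient of arcs
  let D := {p : V × V // Γ.Adj p.1 p.2}
  let rD : D → D → Prop := fun d d' => ∃ a : ↥A,
    ((a : G) • d.1.1 = d'.1.1 ∧ (a : G) • d.1.2 = d'.1.2) ∨
    ((a : G) • d.1.1 = d'.1.2 ∧ (a : G) • d.1.2 = d'.1.1)
  have rD_equiv : Equivalence rD := by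
    constructor
    · intro d; exact ⟨1, Or.inl ⟨by simp, by simp⟩⟩
    · rintro d d' ⟨a, ⟨h1, h2⟩ | ⟨h1, h2⟩⟩
      · exact ⟨a⁻¹, Or.inl ⟨by rw [← h1]; push_cast; rw [inv_smul_smul],
          by rw [← h2]; push_cast; rw [inv_smul_smul]⟩⟩
      · exact ⟨a⁻¹, Or.inr ⟨by rw [← h2]; push_cast; rw [inv_smul_smul],
          by rw [← h1]; push_cast; rw [inv_smul_smul]⟩⟩
    · rintro d d' d'' ⟨a, ⟨h1, h2⟩ | ⟨h1, h2⟩⟩ ⟨c, ⟨h3, h4⟩ | ⟨h3, h4⟩⟩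
      · exact ⟨c * a, Or.inl ⟨by push_cast; rw [mul_smul, h1, h3],
          by push_cast; rw [mul_smul, h2, h4]⟩⟩
      · exact ⟨c * a, Or.inr ⟨by push_cast; rw [mul_smul, h1, h3],
          by push_cast; rw [mul_smul, h2, h4]⟩⟩
      · exact ⟨c * a, Or.inr ⟨by push_cast; rw [mul_smul, h1, h4],
          by push_cast; rw [mul_smul, h2, h3]⟩⟩
      · exact ⟨c * a, Or.inl ⟨by push_cast; rw [mul_smul, h1, h4],
          by push_cast; rw [mul_smul, h2, h3]⟩⟩
  let sD : Setoid D := ⟨rD, rD_equiv⟩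
  let b : Quotient sD → ↥A := fun q => β q.out.1.1 q.out.1.2
  have hβmem : ∀ x y, Γ.Adj x y → β x y ∈ Subgroup.closure (Set.range b) := by
    intro x y h
    have hrel' := Quotient.exact (Quotient.out_eq (Quotient.mk sD ⟨(x, y), h⟩))
    obtain ⟨a, hcase⟩ := hrel'
    have hb : b (Quotient.mk sD ⟨(x, y), h⟩) =
        β (Quotient.mk sD ⟨(x, y), h⟩).out.1.1 (Quotient.mk sD ⟨(x, y), h⟩).out.1.2 := rfl
    rcases hcase with ⟨h1, h2⟩ | ⟨h1, h2⟩
    · have e1 := hβ_smul a (Quotient.mk sD ⟨(x, y), h⟩).out.1.1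
        (Quotient.mk sD ⟨(x, y), h⟩).out.1.2
      rw [h1, h2] at e1
      have he : β x y = b (Quotient.mk sD ⟨(x, y), h⟩) := e1
      rw [he]
      exact Subgroup.subset_closure ⟨_, rfl⟩
    · have e1 := hβ_smul a (Quotient.mk sD ⟨(x, y), h⟩).out.1.1
        (Quotient.mk sD ⟨(x, y), h⟩).out.1.2
      rw [h1, h2] at e1
      have he2 : β x y = (b (Quotient.mk sD ⟨(x, y), h⟩))⁻¹ :=
        (hβ_symm y x).trans (congrArg Inv.inv e1)
      rw [he2]
      exact inv_mem (Subgroup.subset_closure ⟨_, rfl⟩)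
  have hstep : ∀ x y, Γ.Adj x y → al x ∈ Subgroup.closure (Set.range b) →
      al y ∈ Subgroup.closure (Set.range b) := by
    intro x y h hx
    have he : al y = al x * β x y := (mul_inv_cancel_left (al x) (al y)).symm
    rw [he]
    exact mul_mem hx (hβmem x y h)
  have hgen : ∀ a : ↥A, a ∈ Subgroup.closure (Set.range b) := by
    intro a
    obtain ⟨x₀⟩ := hconn.nonempty
    have hbase : al (rep x₀) ∈ Subgroup.closure (Set.range b) := by
      rw [hα_rep]; exact one_mem _
    have hend : al ((a : G) • rep x₀) ∈ Subgroup.closure (Set.range b) :=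
      reach_ind2 Γ (fun y => al y ∈ Subgroup.closure (Set.range b)) hstep
        (hconn.preconnected (rep x₀) ((a : G) • rep x₀)) hbase
    rwa [hα_mul, hα_rep, mul_one] at hend
  -- there are at most t classes of arcs
  haveI : Finite (Quotient sD) := Quotient.finite sD
  haveI : Fintype (Quotient sD) := Fintype.ofFinite _
  haveI : DecidableEq (Quotient sD) := Classical.decEq _
  have hQDle : Nat.card (Quotient sD) ≤ t := by
    have hfun : ∀ g : G, Γ.Adj (g • u₀) (g • w₀) := fun g => (hAut g u₀ w₀).mpr hadj₀
    have hresp : ∀ g g' : G, (QuotientGroup.leftRel (Subgroup.center G)) g g' →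
        Quotient.mk sD ⟨(g • u₀, g • w₀), hfun g⟩ =
        Quotient.mk sD ⟨(g' • u₀, g' • w₀), hfun g'⟩ := by
      intro g g' hgg
      rw [QuotientGroup.leftRel_apply] at hgg
      apply Quotient.sound
      refine ⟨⟨g⁻¹ * g', hgg⟩, Or.inl ⟨?_, ?_⟩⟩
      · show (g⁻¹ * g') • (g • u₀) = g' • u₀
        rw [← mul_smul]
        congr 1
        have hc := (Subgroup.mem_center_iff.mp hgg) g
        calc g⁻¹ * g' * g = g * (g⁻¹ * g') := by rw [← hc]
        _ = g' := by group
      · show (g⁻¹ * g') • (g • w₀) = g' • w₀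
        rw [← mul_smul]
        congr 1
        have hc := (Subgroup.mem_center_iff.mp hgg) g
        calc g⁻¹ * g' * g = g * (g⁻¹ * g') := by rw [← hc]
        _ = g' := by group
    let ψ : G ⧸ Subgroup.center G → Quotient sD :=
      Quotient.lift (fun g => Quotient.mk sD ⟨(g • u₀, g • w₀), hfun g⟩) hresp
    have hsurj : Function.Surjective ψ := by
      intro q
      obtain ⟨d, rfl⟩ := Quotient.exists_rep q
      obtain ⟨⟨x, y⟩, hd⟩ := d
      obtain ⟨g, hg⟩ := het u₀ w₀ x y hadj₀ hd
      refine ⟨QuotientGroup.mk g, ?_⟩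
      show Quotient.mk sD ⟨(g • u₀, g • w₀), hfun g⟩ = Quotient.mk sD ⟨(x, y), hd⟩
      apply Quotient.sound
      rcases hg with ⟨h1, h2⟩ | ⟨h1, h2⟩
      · exact ⟨1, Or.inl ⟨by simpa using h1, by simpa using h2⟩⟩
      · exact ⟨1, Or.inr ⟨by simpa using h1, by simpa using h2⟩⟩
    calc Nat.card (Quotient sD) ≤ Nat.card (G ⧸ Subgroup.center G) :=
          Nat.card_le_card_of_surjective ψ hsurj
    _ = t := (Subgroup.index_eq_card _).symm
  -- generators have order dividing 2t
  have hord : ∀ q : Quotient sD, (b q) ^ (2 * t) = 1 := by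
    intro q
    have h1 : ((b q : G)) ^ (2 * t) = 1 := hexp _
    ext
    push_cast
    exact h1
  -- final count
  have hcardA := open scoped IsMulCommutative in card_le_pow_of_gen b hgen (2 * t) (by omega) hord
  have hcard2 : Fintype.card (Quotient sD) ≤ t := by
    rw [← Nat.card_eq_fintype_card]
    exact hQDle
  have hcardA' : Nat.card ↥A ≤ (2 * t) ^ t :=
    le_trans hcardA (Nat.pow_le_pow_right (by omega) hcard2)
  have hsplit : Nat.card ↥A * t = Nat.card G := Subgroup.card_mul_index A
  calc Nat.card G = Nat.card ↥A * t := hsplit.symm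
  _ ≤ (2 * t) ^ t * t := Nat.mul_le_mul_right t hcardA'
  _ = t * (2 * t) ^ t := Nat.mul_comm _ _
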